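/- arXiv:1910.06502 — 4 statements merged into one kernel-verified Lean document; each statement's English description precedes it below -/
import Mathlib

section
/- For an even natural number ℓ and a natural number j with j ≤ ℓ/2, the binomial coefficient satisfies C(ℓ, 2j) = C(ℓ/2, j) · (1/2)_{ℓ/2} / ((1/2)_j · (1/2)_{ℓ/2 - j}), where (1/2)_k is the rising factorial evaluated in ℚ. -/
open Polynomial

lemma asc_half_eval (k : ℕ) :
    (ascPochhammer ℚ k).eval (1 / 2) = (Nat.factorial (2 * k)) / (4 ^ k * Nat.factorial k) := by
  induction k with
  | zero => simp
  | succ n ih =>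
    rw [ascPochhammer_succ_right, Polynomial.eval_mul, ih, Polynomial.eval_add, Polynomial.eval_X,
      Polynomial.eval_natCast]
    have h1 : (2 * (n + 1)) = (2 * n) + 1 + 1 := by ring
    rw [h1, Nat.factorial_succ, Nat.factorial_succ, Nat.factorial_succ]
    push_cast
    have h4 : (4:ℚ) ^ n ≠ 0 := by positivity
    have hf : ((Nat.factorial n : ℚ)) ≠ 0 := by
      exact_mod_cast Nat.factorial_ne_zero n
    field_simp
    ring

/-- For even `ℓ` and `j ≤ ℓ/2`:
`C(ℓ, 2j) = C(ℓ/2, j) · (1/2)_{ℓ/2} / ((1/2)_j (1/2)_{ℓ/2-j})` in `ℚ`. -/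
theorem choose_two_mul_eq (ℓ j : ℕ) (hℓ : Even ℓ) (hj : j ≤ ℓ / 2) :
    (ℓ.choose (2 * j) : ℚ)
      = ((ℓ / 2).choose j : ℚ) * (ascPochhammer ℚ (ℓ / 2)).eval (1 / 2)
          / ((ascPochhammer ℚ j).eval (1 / 2) * (ascPochhammer ℚ (ℓ / 2 - j)).eval (1 / 2)) := by
  obtain ⟨m, rfl⟩ := hℓ
  have hm : (m + m) / 2 = m := by omega
  rw [hm] at hj ⊢
  have hle : 2 * j ≤ m + m := by omega
  have h1 : m + m - 2 * j = 2 * (m - j) := by omega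
  rw [asc_half_eval, asc_half_eval, asc_half_eval,
    Nat.cast_choose ℚ hle, Nat.cast_choose ℚ hj, h1]
  have e1 : (Nat.factorial (2*j) : ℚ) ≠ 0 := by exact_mod_cast Nat.factorial_ne_zero _
  have e2 : (Nat.factorial (2*(m-j)) : ℚ) ≠ 0 := by exact_mod_cast Nat.factorial_ne_zero _
  have e3 : (Nat.factorial j : ℚ) ≠ 0 := by exact_mod_cast Nat.factorial_ne_zero _
  have e4 : (Nat.factorial (m-j) : ℚ) ≠ 0 := by exact_mod_cast Nat.factorial_ne_zero _
  have e5 : (Nat.factorial m : ℚ) ≠ 0 := by exact_mod_cast Nat.factorial_ne_zero _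
  have e6 : (Nat.factorial (2*m) : ℚ) ≠ 0 := by exact_mod_cast Nat.factorial_ne_zero _
  have h4 : ∀ n : ℕ, (4:ℚ) ^ n ≠ 0 := fun n => by positivity
  have hmm : m + m = 2 * m := by ring
  rw [hmm]
  have h4s : (4:ℚ) ^ j * 4 ^ (m - j) = 4 ^ m := by
    rw [← pow_add]; congr 1; omega
  field_simp
  ring_nf
  rw [← h4s]
end

section
/- Let p be an odd prime, r ≥ 2, and let (L, Q) be a nondegenerate quadratic ℤ/p^rℤ-module of the form (ℤ/p^rℤ)^{2m} with the split form Q(x,y) = ∑_i x_i y_i (m ≥ 1). Let η ∈ L be such that the reduction of η mod p is nonzero and Q(η) is a unit mod p. Then ∑_{x ∈ L, Q(x) = 0 in ℤ/p^rℤ} ψ((η,x)) = 0, where ψ is an additive character of ℤ/p^rℤ of exact order p^r and (·,·) is the bilinear form associated to Q. -/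
open Finset

private lemma addChar_map_sum {M : Type*} [AddCommMonoid M] (ψ : AddChar M ℂ)
    {ι : Type*} (s : Finset ι) (f : ι → M) :
    ψ (∑ i ∈ s, f i) = ∏ i ∈ s, ψ (f i) := by
  classical
  induction s using Finset.cons_induction with
  | empty => simp
  | cons a s ha ih => rw [Finset.sum_cons, Finset.prod_cons, AddChar.map_add_eq_mul, ih]

private lemma char_sum_mul {n : ℕ} [NeZero n] (ψ : AddChar (ZMod n) ℂ)
    (hψ : ∀ a, ψ a = 1 ↔ a = 0) (c : ZMod n) :
    ∑ a : ZMod n, ψ (c * a) = if c = 0 then (n : ℂ) else 0 := by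
  split_ifs with hc
  · simp [hc, Finset.card_univ, ZMod.card]
  · have h1 : ∑ a : ZMod n, ψ (c * (a + 1)) = ∑ a : ZMod n, ψ (c * a) :=
      Fintype.sum_equiv (Equiv.addRight 1) _ _ (fun a => rfl)
    have h2 : ∀ a : ZMod n, ψ (c * (a + 1)) = ψ (c * a) * ψ c := fun a => by
      rw [mul_add, mul_one, AddChar.map_add_eq_mul]
    rw [Finset.sum_congr rfl (fun a _ => h2 a), ← Finset.sum_mul] at h1
    have hc1 : ψ c ≠ 1 := fun h => hc ((hψ c).1 h)
    have h3 : (∑ a : ZMod n, ψ (c * a)) * (ψ c - 1) = 0 := by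
      rw [mul_sub, h1, mul_one, sub_self]
    rcases mul_eq_zero.1 h3 with h | h
    · exact h
    · exact absurd (sub_eq_zero.1 h) hc1

private lemma char_sum_pi {n m : ℕ} [NeZero n] (ψ : AddChar (ZMod n) ℂ) (c : Fin m → ZMod n) :
    ∑ f : Fin m → ZMod n, ψ (∑ i, c i * f i) = ∏ i, ∑ a : ZMod n, ψ (c i * a) := by
  have h := Finset.sum_prod_piFinset (Finset.univ : Finset (ZMod n)) (fun i a => ψ (c i * a))
  rw [Fintype.piFinset_univ] at h
  rw [← h]
  exact Finset.sum_congr rfl fun f _ => addChar_map_sum ψ _ _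

/-- Let `p` be an odd prime, `r ≥ 2`, `L = (ℤ/p^rℤ)^{2m}` with the split form
`Q(x,y) = ∑ x_i y_i`, and `η ∈ L` unramified (some coordinate a unit, and `Q(η)` a unit).
If `ψ` is an additive character of `ℤ/p^rℤ` of exact order `p^r`, then
`∑_{Q(x)=0} ψ((η,x)) = 0`, where `(η,x) = Q(η+x) - Q(η) - Q(x)`. -/
theorem isotropic_char_sum_mod_prime_pow (p : ℕ) [Fact p.Prime] (hodd : p ≠ 2)
    (r : ℕ) (hr : 2 ≤ r) (m : ℕ) (hm : 1 ≤ m)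
    (Q : (Fin m → ZMod (p ^ r)) × (Fin m → ZMod (p ^ r)) → ZMod (p ^ r))
    (hQ : ∀ v, Q v = ∑ i, v.1 i * v.2 i)
    (η : (Fin m → ZMod (p ^ r)) × (Fin m → ZMod (p ^ r)))
    (hη₁ : (∃ i, IsUnit (η.1 i)) ∨ ∃ i, IsUnit (η.2 i))
    (hη₂ : IsUnit (Q η))
    (ψ : AddChar (ZMod (p ^ r)) ℂ) (hψ : ∀ a, ψ a = 1 ↔ a = 0) :
    ∑ x ∈ Finset.univ.filter (fun x => Q x = 0), ψ (Q (η + x) - Q η - Q x) = 0 := by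
  classical
  have hp : p.Prime := Fact.out
  haveI : NeZero (p ^ r) := ⟨pow_ne_zero r hp.pos.ne'⟩
  set N : ℂ := ((p ^ r : ℕ) : ℂ) with hN
  have hN0 : N ≠ 0 := Nat.cast_ne_zero.2 (pow_ne_zero r hp.pos.ne')
  set ε : ZMod (p ^ r) := ((p ^ (r - 1) : ℕ) : ZMod (p ^ r)) with hε
  have hpnu : ¬ IsUnit (p : ℕ) := fun h => hp.one_lt.ne' (Nat.isUnit_iff.1 h)
  have hε0 : ε ≠ 0 := by
    rw [hε, Ne, ZMod.natCast_eq_zero_iff,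
      pow_dvd_pow_iff hp.pos.ne' hpnu]
    omega
  have hpow : p * p ^ (r - 1) = p ^ r := by
    rw [← pow_succ']; congr 1; omega
  have hpε : (p : ZMod (p ^ r)) * ε = 0 := by
    rw [hε, show ((p : ℕ) : ZMod (p ^ r)) = ((p : ℕ) : ZMod (p ^ r)) from rfl, ← Nat.cast_mul,
      hpow, ZMod.natCast_self]
  have hdvd_of_not_unit : ∀ t : ZMod (p ^ r), ¬ IsUnit t → (p : ZMod (p ^ r)) ∣ t := by
    intro t ht
    have hv : ((t.val : ℕ) : ZMod (p ^ r)) = t := ZMod.natCast_zmod_val t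
    have hnc : ¬ (t.val).Coprime (p ^ r) := by
      rw [← ZMod.isUnit_iff_coprime]; rwa [hv]
    have hpd : p ∣ t.val := by
      by_contra hnd
      exact hnc (Nat.Coprime.pow_right r ((hp.coprime_iff_not_dvd.2 hnd).symm))
    obtain ⟨k, hk⟩ := hpd
    exact ⟨(k : ZMod (p ^ r)), by rw [← hv, hk, Nat.cast_mul]⟩
  have hnotunit_p : ¬ IsUnit (p : ZMod (p ^ r)) := by
    rw [ZMod.isUnit_iff_coprime]
    intro h
    have h2 := Nat.gcd_eq_left (dvd_pow_self p (show r ≠ 0 by omega))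
    rw [Nat.Coprime, h2] at h
    exact hp.one_lt.ne' h
  have hunit_iff : ∀ t : ZMod (p ^ r), IsUnit t ↔ ¬ (p : ZMod (p ^ r)) ∣ t := by
    intro t
    constructor
    · rintro hu ⟨s, rfl⟩
      exact hnotunit_p (isUnit_of_mul_isUnit_left hu)
    · intro hnd
      by_contra h
      exact hnd (hdvd_of_not_unit t h)
  have hpow2 : p * p ^ (r - 2) = p ^ (r - 1) := by
    rw [← pow_succ']; congr 1; omega
  have hpdvdε : (p : ZMod (p ^ r)) ∣ ε :=
    ⟨((p ^ (r - 2) : ℕ) : ZMod (p ^ r)), by rw [hε, ← hpow2]; push_cast; ring⟩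
  have htε : ∀ t : ZMod (p ^ r), ¬ IsUnit t → t * ε = 0 := by
    intro t ht
    obtain ⟨s, rfl⟩ := hdvd_of_not_unit t ht
    rw [mul_comm (p : ZMod (p ^ r)) s, mul_assoc, hpε, mul_zero]
  have hψε : ψ ε ≠ 1 := fun h => hε0 ((hψ ε).1 h)
  -- the bilinear form
  set b : (Fin m → ZMod (p ^ r)) × (Fin m → ZMod (p ^ r)) → ZMod (p ^ r) :=
    fun x => ∑ i, (η.1 i * x.2 i + η.2 i * x.1 i) with hbdef
  have hb : ∀ x, Q (η + x) - Q η - Q x = b x := by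
    intro x
    simp only [hQ, hbdef]
    rw [← Finset.sum_sub_distrib, ← Finset.sum_sub_distrib]
    refine Finset.sum_congr rfl fun i _ => ?_
    simp only [Prod.fst_add, Prod.snd_add, Pi.add_apply]
    ring
  set F : ZMod (p ^ r) → ℂ :=
    fun t => ∑ x : (Fin m → ZMod (p ^ r)) × (Fin m → ZMod (p ^ r)), ψ (t * Q x + b x) with hFdef
  -- step 1: relate ∑ F to the goal sum
  have hsplit : ∑ t : ZMod (p ^ r), F t
      = N * ∑ x ∈ Finset.univ.filter (fun x => Q x = 0), ψ (b x) := by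
    calc ∑ t : ZMod (p ^ r), F t
        = ∑ t : ZMod (p ^ r), ∑ x : (Fin m → ZMod (p ^ r)) × (Fin m → ZMod (p ^ r)),
            ψ (Q x * t) * ψ (b x) := by
          refine Finset.sum_congr rfl fun t _ => Finset.sum_congr rfl fun x _ => ?_
          rw [← AddChar.map_add_eq_mul, mul_comm t (Q x)]
      _ = ∑ x : (Fin m → ZMod (p ^ r)) × (Fin m → ZMod (p ^ r)), ∑ t : ZMod (p ^ r),
            ψ (Q x * t) * ψ (b x) := Finset.sum_comm
      _ = ∑ x : (Fin m → ZMod (p ^ r)) × (Fin m → ZMod (p ^ r)),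
            (if Q x = 0 then N else 0) * ψ (b x) := by
          refine Finset.sum_congr rfl fun x _ => ?_
          rw [← Finset.sum_mul, char_sum_mul ψ hψ (Q x)]
      _ = N * ∑ x ∈ Finset.univ.filter (fun x => Q x = 0), ψ (b x) := by
          rw [Finset.sum_filter, Finset.mul_sum]
          refine Finset.sum_congr rfl fun x _ => ?_
          split_ifs <;> simp
  -- step 2: non-unit t contribute 0
  have hnon : ∀ t : ZMod (p ^ r), ¬ IsUnit t → F t = 0 := by
    intro t ht
    have htε' := htε t ht
    obtain ⟨j, hj⟩ | ⟨j, hj⟩ := hη₁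
    · -- η.1 j is a unit, shift the second coordinate
      set w : (Fin m → ZMod (p ^ r)) × (Fin m → ZMod (p ^ r)) := (0, Pi.single j ε) with hw
      have hkey : ∀ x, t * Q (x + w) + b (x + w) = (t * Q x + b x) + η.1 j * ε := by
        intro x
        have h1 : Q (x + w) = Q x + x.1 j * ε := by
          simp only [hQ]
          have hterm : ∀ i, (x + w).1 i * (x + w).2 i
              = x.1 i * x.2 i + x.1 i * (Pi.single j ε : Fin m → ZMod (p ^ r)) i := by
            intro i
            simp only [hw, Prod.fst_add, Prod.snd_add, Pi.add_apply, Pi.zero_apply, add_zero]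
            ring
          rw [Finset.sum_congr rfl fun i _ => hterm i, Finset.sum_add_distrib]
          congr 1
          rw [Finset.sum_eq_single j (fun i _ hij => by rw [Pi.single_eq_of_ne hij, mul_zero])
            (fun h => absurd (Finset.mem_univ j) h), Pi.single_eq_same]
        have h2 : b (x + w) = b x + η.1 j * ε := by
          simp only [hbdef]
          have hterm : ∀ i, (η.1 i * (x + w).2 i + η.2 i * (x + w).1 i)
              = (η.1 i * x.2 i + η.2 i * x.1 i) + η.1 i * (Pi.single j ε : Fin m → ZMod (p ^ r)) i := by
            intro i
            simp only [hw, Prod.fst_add, Prod.snd_add, Pi.add_apply, Pi.zero_apply, add_zero]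
            ring
          rw [Finset.sum_congr rfl fun i _ => hterm i, Finset.sum_add_distrib]
          congr 1
          rw [Finset.sum_eq_single j (fun i _ hij => by rw [Pi.single_eq_of_ne hij, mul_zero])
            (fun h => absurd (Finset.mem_univ j) h), Pi.single_eq_same]
        rw [h1, h2]
        linear_combination x.1 j * htε'
      have hbij : ∑ x : (Fin m → ZMod (p ^ r)) × (Fin m → ZMod (p ^ r)),
          ψ (t * Q (x + w) + b (x + w)) = F t :=
        Fintype.sum_equiv (Equiv.addRight w) _ _ (fun x => rfl)
      have h3 : ∑ x : (Fin m → ZMod (p ^ r)) × (Fin m → ZMod (p ^ r)),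
          ψ (t * Q (x + w) + b (x + w)) = F t * ψ (η.1 j * ε) := by
        rw [hFdef, Finset.sum_mul]
        exact Finset.sum_congr rfl fun x _ => by rw [hkey, AddChar.map_add_eq_mul]
      have h4 : F t * ψ (η.1 j * ε) = F t := by rw [← h3, hbij]
      have h5 : ψ (η.1 j * ε) ≠ 1 := fun h =>
        hε0 ((IsUnit.mul_right_eq_zero hj).1 ((hψ _).1 h))
      have h6 : F t * (ψ (η.1 j * ε) - 1) = 0 := by
        rw [mul_sub, h4, mul_one, sub_self]
      rcases mul_eq_zero.1 h6 with h | h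
      · exact h
      · exact absurd (sub_eq_zero.1 h) h5
    · -- η.2 j is a unit, shift the first coordinate
      set w : (Fin m → ZMod (p ^ r)) × (Fin m → ZMod (p ^ r)) := (Pi.single j ε, 0) with hw
      have hkey : ∀ x, t * Q (x + w) + b (x + w) = (t * Q x + b x) + η.2 j * ε := by
        intro x
        have h1 : Q (x + w) = Q x + x.2 j * ε := by
          simp only [hQ]
          have hterm : ∀ i, (x + w).1 i * (x + w).2 i
              = x.1 i * x.2 i + x.2 i * (Pi.single j ε : Fin m → ZMod (p ^ r)) i := by
            intro i
            simp only [hw, Prod.fst_add, Prod.snd_add, Pi.add_apply, Pi.zero_apply, add_zero]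
            ring
          rw [Finset.sum_congr rfl fun i _ => hterm i, Finset.sum_add_distrib]
          congr 1
          rw [Finset.sum_eq_single j (fun i _ hij => by rw [Pi.single_eq_of_ne hij, mul_zero])
            (fun h => absurd (Finset.mem_univ j) h), Pi.single_eq_same]
        have h2 : b (x + w) = b x + η.2 j * ε := by
          simp only [hbdef]
          have hterm : ∀ i, (η.1 i * (x + w).2 i + η.2 i * (x + w).1 i)
              = (η.1 i * x.2 i + η.2 i * x.1 i) + η.2 i * (Pi.single j ε : Fin m → ZMod (p ^ r)) i := by
            intro i
            simp only [hw, Prod.fst_add, Prod.snd_add, Pi.add_apply, Pi.zero_apply, add_zero]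
            ring
          rw [Finset.sum_congr rfl fun i _ => hterm i, Finset.sum_add_distrib]
          congr 1
          rw [Finset.sum_eq_single j (fun i _ hij => by rw [Pi.single_eq_of_ne hij, mul_zero])
            (fun h => absurd (Finset.mem_univ j) h), Pi.single_eq_same]
        rw [h1, h2]
        linear_combination x.2 j * htε'
      have hbij : ∑ x : (Fin m → ZMod (p ^ r)) × (Fin m → ZMod (p ^ r)),
          ψ (t * Q (x + w) + b (x + w)) = F t :=
        Fintype.sum_equiv (Equiv.addRight w) _ _ (fun x => rfl)
      have h3 : ∑ x : (Fin m → ZMod (p ^ r)) × (Fin m → ZMod (p ^ r)),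
          ψ (t * Q (x + w) + b (x + w)) = F t * ψ (η.2 j * ε) := by
        rw [hFdef, Finset.sum_mul]
        exact Finset.sum_congr rfl fun x _ => by rw [hkey, AddChar.map_add_eq_mul]
      have h4 : F t * ψ (η.2 j * ε) = F t := by rw [← h3, hbij]
      have h5 : ψ (η.2 j * ε) ≠ 1 := fun h =>
        hε0 ((IsUnit.mul_right_eq_zero hj).1 ((hψ _).1 h))
      have h6 : F t * (ψ (η.2 j * ε) - 1) = 0 := by
        rw [mul_sub, h4, mul_one, sub_self]
      rcases mul_eq_zero.1 h6 with h | h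
      · exact h
      · exact absurd (sub_eq_zero.1 h) h5
  -- step 3: unit t give a Gauss-sum value
  have hunitF : ∀ u : (ZMod (p ^ r))ˣ,
      F (↑u) = N ^ m * ψ (((-(u⁻¹ * hη₂.unit) : (ZMod (p ^ r))ˣ) : ZMod (p ^ r))) := by
    intro u
    have hts : (↑u : ZMod (p ^ r)) * ↑u⁻¹ = 1 := by
      rw [← Units.val_mul, mul_inv_cancel, Units.val_one]
    set t : ZMod (p ^ r) := ↑u with htdef
    set s : ZMod (p ^ r) := ↑u⁻¹ with hsdef
    set w : (Fin m → ZMod (p ^ r)) × (Fin m → ZMod (p ^ r)) :=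
      (fun i => s * η.1 i, fun i => s * η.2 i) with hw
    have hkey : ∀ x, t * Q x + b x = t * Q (x + w) - s * Q η := by
      intro x
      simp only [hQ, hbdef, hw, Prod.fst_add, Prod.snd_add, Pi.add_apply]
      rw [Finset.mul_sum, Finset.mul_sum, Finset.mul_sum, ← Finset.sum_add_distrib,
        ← Finset.sum_sub_distrib]
      refine Finset.sum_congr rfl fun i _ => ?_
      linear_combination (-(x.1 i * η.2 i) - η.1 i * x.2 i - s * η.1 i * η.2 i) * hts
    have hG : ∑ y : (Fin m → ZMod (p ^ r)) × (Fin m → ZMod (p ^ r)), ψ (t * Q y) = N ^ m := by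
      rw [Fintype.sum_prod_type]
      have hin : ∀ y1 : Fin m → ZMod (p ^ r),
          ∑ y2 : Fin m → ZMod (p ^ r), ψ (t * Q (y1, y2))
            = ∏ i, ∑ a : ZMod (p ^ r), ψ ((t * y1 i) * a) := by
        intro y1
        rw [← char_sum_pi ψ]
        refine Finset.sum_congr rfl fun y2 _ => ?_
        congr 1
        rw [hQ, Finset.mul_sum]
        exact Finset.sum_congr rfl fun i _ => by ring
      rw [Finset.sum_congr rfl fun y1 _ => hin y1]
      have hite : ∀ y1 : Fin m → ZMod (p ^ r),
          ∏ i, ∑ a : ZMod (p ^ r), ψ ((t * y1 i) * a) = if y1 = 0 then N ^ m else 0 := by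
        intro y1
        by_cases hy : y1 = 0
        · subst hy
          rw [if_pos rfl]
          have : ∀ i : Fin m, ∑ a : ZMod (p ^ r), ψ ((t * (0 : Fin m → ZMod (p ^ r)) i) * a)
              = N := by
            intro i
            rw [Pi.zero_apply, mul_zero, char_sum_mul ψ hψ 0, if_pos rfl]
          rw [Finset.prod_congr rfl fun i _ => this i, Finset.prod_const, Finset.card_univ,
            Fintype.card_fin]
        · obtain ⟨i, hi⟩ : ∃ i, y1 i ≠ 0 := by
            by_contra h; push_neg at h; exact hy (funext h)
          rw [if_neg hy]
          refine Finset.prod_eq_zero (Finset.mem_univ i) ?_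
          rw [char_sum_mul ψ hψ, if_neg, ]
          exact fun h => hi ((IsUnit.mul_right_eq_zero u.isUnit).1 h)
      rw [Finset.sum_congr rfl fun y1 _ => hite y1, Finset.sum_ite_eq' Finset.univ 0
        (fun _ => N ^ m), if_pos (Finset.mem_univ 0)]
    have hval : ((-(u⁻¹ * hη₂.unit) : (ZMod (p ^ r))ˣ) : ZMod (p ^ r)) = -(s * Q η) := by
      rw [Units.val_neg, Units.val_mul, IsUnit.unit_spec]
    calc F t
        = ∑ x : (Fin m → ZMod (p ^ r)) × (Fin m → ZMod (p ^ r)),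
            ψ (t * Q (x + w)) * ψ (-(s * Q η)) := by
          rw [hFdef]
          refine Finset.sum_congr rfl fun x _ => ?_
          rw [← AddChar.map_add_eq_mul, ← sub_eq_add_neg, ← hkey]
      _ = (∑ x : (Fin m → ZMod (p ^ r)) × (Fin m → ZMod (p ^ r)),
            ψ (t * Q (x + w))) * ψ (-(s * Q η)) := by rw [Finset.sum_mul]
      _ = N ^ m * ψ (-(s * Q η)) := by
          have hb2 := Fintype.sum_equiv (Equiv.addRight w)
            (fun x : (Fin m → ZMod (p ^ r)) × (Fin m → ZMod (p ^ r)) => ψ (t * Q (x + w)))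
            (fun y => ψ (t * Q y)) (fun x => rfl)
          rw [hb2, hG]
      _ = N ^ m * ψ (((-(u⁻¹ * hη₂.unit) : (ZMod (p ^ r))ˣ) : ZMod (p ^ r))) := by rw [hval]
  -- step 4: the sum of ψ over units vanishes
  have himg : Finset.univ.filter (fun t : ZMod (p ^ r) => IsUnit t)
      = Finset.univ.image (fun u : (ZMod (p ^ r))ˣ => (u : ZMod (p ^ r))) := by
    ext t
    simp only [Finset.mem_filter, Finset.mem_univ, true_and, Finset.mem_image]
    constructor
    · intro h; exact ⟨h.unit, h.unit_spec⟩
    · rintro ⟨u, _, rfl⟩; exact u.isUnit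
  have hval_inj : Function.Injective (fun u : (ZMod (p ^ r))ˣ => (u : ZMod (p ^ r))) :=
    fun _ _ h => Units.ext h
  have hsum_psi_units :
      ∑ t ∈ Finset.univ.filter (fun t : ZMod (p ^ r) => IsUnit t), ψ t = 0 := by
    set A := Finset.univ.filter (fun t : ZMod (p ^ r) => IsUnit t) with hA
    have hmem : ∀ t : ZMod (p ^ r), t ∈ A ↔ IsUnit t := by
      intro t; rw [hA, Finset.mem_filter]; simp
    have hshift : ∑ t ∈ A, ψ (t + ε) = ∑ t ∈ A, ψ t := by
      refine Finset.sum_nbij' (fun t => t + ε) (fun t => t - ε) ?_ ?_ ?_ ?_ ?_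
      · intro a ha
        rw [hmem] at ha ⊢
        rw [hunit_iff] at ha ⊢
        intro hd
        exact ha (by simpa using dvd_sub hd hpdvdε)
      · intro a ha
        rw [hmem] at ha ⊢
        rw [hunit_iff] at ha ⊢
        intro hd
        exact ha (by simpa using dvd_add hd hpdvdε)
      · intro a _; ring
      · intro a _; ring
      · intro a _; rfl
    have h1 : ∑ t ∈ A, ψ t * ψ ε = ∑ t ∈ A, ψ t := by
      rw [← hshift]
      exact Finset.sum_congr rfl fun t _ => (AddChar.map_add_eq_mul ψ t ε).symm
    rw [← Finset.sum_mul] at h1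
    have h3 : (∑ t ∈ A, ψ t) * (ψ ε - 1) = 0 := by
      rw [mul_sub, h1, mul_one, sub_self]
    rcases mul_eq_zero.1 h3 with h | h
    · exact h
    · exact absurd (sub_eq_zero.1 h) hψε
  -- step 5: assemble
  have hAF : ∑ t ∈ Finset.univ.filter (fun t : ZMod (p ^ r) => IsUnit t), F t = 0 := by
    rw [himg, Finset.sum_image (fun a _ c _ h => hval_inj h)]
    rw [Finset.sum_congr rfl fun u _ => hunitF u, ← Finset.mul_sum]
    have he : ∑ u : (ZMod (p ^ r))ˣ, ψ (((-(u⁻¹ * hη₂.unit) : (ZMod (p ^ r))ˣ) : ZMod (p ^ r)))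
        = ∑ u : (ZMod (p ^ r))ˣ, ψ ↑u := by
      refine Fintype.sum_equiv
        ((Equiv.inv _).trans ((Equiv.mulRight hη₂.unit).trans (Equiv.neg _))) _ _ (fun u => rfl)
    rw [he]
    have h2 : ∑ u : (ZMod (p ^ r))ˣ, ψ ↑u
        = ∑ t ∈ Finset.univ.filter (fun t : ZMod (p ^ r) => IsUnit t), ψ t := by
      rw [himg, Finset.sum_image (fun a _ c _ h => hval_inj h)]
    rw [h2, hsum_psi_units, mul_zero]
  have htotal : ∑ t : ZMod (p ^ r), F t = 0 := by
    rw [← Finset.sum_filter_add_sum_filter_not Finset.univ (fun t => IsUnit t) F, hAF,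
      Finset.sum_eq_zero (fun t ht => hnon t (Finset.mem_filter.1 ht).2), add_zero]
  have hgoal : ∑ x ∈ Finset.univ.filter (fun x => Q x = 0), ψ (Q (η + x) - Q η - Q x)
      = ∑ x ∈ Finset.univ.filter (fun x => Q x = 0), ψ (b x) :=
    Finset.sum_congr rfl fun x _ => by rw [hb]
  rw [hgoal]
  have hfin : N * ∑ x ∈ Finset.univ.filter (fun x => Q x = 0), ψ (b x) = 0 := by
    rw [← hsplit, htotal]
  rcases mul_eq_zero.1 hfin with h | h
  · exact absurd h hN0
  · exact h
end

section
/- For every natural number m ≥ 1 and every complex number s with Re(s) > m/2, the integral over ℝ^m of (1 + ‖x‖²/2)^{-s} dx converges and equals (2π)^{m/2} · Γ(s - m/2) / Γ(s). -/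
open MeasureTheory Real

open Set

private lemma betaIoi (a b : ℂ) (ha : 0 < a.re) (hb : 0 < b.re) :
    ∫ t in Ioi (0:ℝ), (t : ℂ) ^ (a - 1) * ((1 + t : ℝ) : ℂ) ^ (-(a + b))
      = Complex.Gamma a * Complex.Gamma b / Complex.Gamma (a + b) := by
  have himg : (fun x : ℝ => x / (1 - x)) '' Ioo 0 1 = Ioi (0:ℝ) := by
    ext t
    constructor
    · rintro ⟨x, ⟨hx0, hx1⟩, rfl⟩
      have : 0 < 1 - x := by linarith
      exact div_pos hx0 this
    · intro ht
      have ht' : (0:ℝ) < t := ht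
      refine ⟨t / (1 + t), ⟨by positivity, ?_⟩, ?_⟩
      · rw [div_lt_one (by linarith)]; linarith
      · show t / (1 + t) / (1 - t / (1 + t)) = t
        have h1 : 1 - t / (1 + t) = 1 / (1 + t) := by field_simp; ring
        rw [h1]
        field_simp
  have hderiv : ∀ x ∈ Ioo (0:ℝ) 1, HasDerivWithinAt (fun x : ℝ => x / (1 - x))
      (((1 - x) ^ 2)⁻¹) (Ioo 0 1) x := by
    intro x hx
    have hne : (1 : ℝ) - x ≠ 0 := by have := hx.2; intro h; simp only [sub_eq_zero] at h; linarith
    have := (hasDerivAt_id x).div ((hasDerivAt_const x (1:ℝ)).sub (hasDerivAt_id x)) hne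
    refine this.hasDerivWithinAt.congr_deriv ?_
    simp only [Pi.sub_apply, id]
    field_simp
    ring
  have hinj : InjOn (fun x : ℝ => x / (1 - x)) (Ioo 0 1) := by
    intro x hx y hy h
    have hnx : (1 : ℝ) - x ≠ 0 := by have := hx.2; intro hh; simp only [sub_eq_zero] at hh; linarith
    have hny : (1 : ℝ) - y ≠ 0 := by have := hy.2; intro hh; simp only [sub_eq_zero] at hh; linarith
    field_simp at h
    linarith
  have key := integral_image_eq_integral_abs_deriv_smul measurableSet_Ioo hderiv hinj
    (fun t : ℝ => (t : ℂ) ^ (a - 1) * ((1 + t : ℝ) : ℂ) ^ (-(a + b)))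
  rw [himg] at key
  rw [key]
  have hptwise : ∀ x ∈ Ioo (0:ℝ) 1,
      |((1 - x) ^ 2)⁻¹| • ((((x / (1 - x) : ℝ)) : ℂ) ^ (a - 1)
        * ((1 + x / (1 - x) : ℝ) : ℂ) ^ (-(a + b)))
      = (x : ℂ) ^ (a - 1) * ((1 - x : ℝ) : ℂ) ^ (b - 1) := by
    intro x hx
    obtain ⟨hx0, hx1⟩ := hx
    have h1x : (0:ℝ) < 1 - x := by linarith
    have hxc : (x : ℂ) ≠ 0 := by exact_mod_cast hx0.ne'
    have h1xc : ((1 - x : ℝ) : ℂ) ≠ 0 := by exact_mod_cast h1x.ne'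
    have harg : ((1 - x : ℝ) : ℂ).arg ≠ Real.pi := by
      rw [Complex.arg_ofReal_of_nonneg h1x.le]; exact Real.pi_ne_zero.symm
    have hinv : ∀ w : ℂ, (((1 - x)⁻¹ : ℝ) : ℂ) ^ w = ((1 - x : ℝ) : ℂ) ^ (-w) := by
      intro w
      rw [Complex.ofReal_inv, Complex.inv_cpow _ _ harg, ← Complex.cpow_neg]
    have hsum : (1 : ℝ) + x / (1 - x) = (1 - x)⁻¹ := by field_simp; ring
    have hdivmul : (x / (1 - x) : ℝ) = x * (1 - x)⁻¹ := by ring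
    rw [hsum, hdivmul, Complex.ofReal_mul, Complex.mul_cpow_ofReal_nonneg hx0.le (by positivity), hinv, hinv]
    have habs : |((1 - x) ^ 2)⁻¹| = ((1 - x) ^ 2)⁻¹ := abs_of_pos (by positivity)
    rw [habs]
    have hsmul : (((1 - x) ^ 2)⁻¹ : ℝ) • ((x : ℂ) ^ (a - 1) * ((1 - x : ℝ) : ℂ) ^ (-(a-1))
        * ((1 - x : ℝ) : ℂ) ^ (-(-(a + b))))
        = (x : ℂ) ^ (a - 1) * ((((1 - x)^2 : ℝ)⁻¹ : ℂ) * (((1 - x : ℝ) : ℂ) ^ (-(a-1))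
          * ((1 - x : ℝ) : ℂ) ^ (a + b))) := by
      rw [Complex.real_smul]
      push_cast
      ring
    rw [hsmul]
    congr 1
    have h2 : (((1 - x)^2 : ℝ)⁻¹ : ℂ) = ((1 - x : ℝ) : ℂ) ^ (-2 : ℂ) := by
      push_cast
      rw [show (-2 : ℂ) = -(2:ℕ) by norm_num, Complex.cpow_neg, Complex.cpow_natCast]
    rw [h2, ← Complex.cpow_add _ _ h1xc, ← Complex.cpow_add _ _ h1xc]
    congr 1
    ring
  rw [setIntegral_congr_fun measurableSet_Ioo hptwise]
  have hbeta : ∫ x in Ioo (0:ℝ) 1, (x : ℂ) ^ (a - 1) * ((1 - x : ℝ) : ℂ) ^ (b - 1)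
      = Complex.betaIntegral a b := by
    rw [Complex.betaIntegral, intervalIntegral.integral_of_le zero_le_one,
      ← MeasureTheory.integral_Ioc_eq_integral_Ioo]
    norm_num
  rw [hbeta]
  have hG := Complex.Gamma_mul_Gamma_eq_betaIntegral ha hb
  have hGne : Complex.Gamma (a + b) ≠ 0 := by
    apply Complex.Gamma_ne_zero_of_re_pos
    simp only [Complex.add_re]
    linarith
  field_simp [hG]
  rw [hG]; ring

private lemma radialIoi (m : ℕ) (hm : 1 ≤ m) (s : ℂ) (hs : (m : ℝ) / 2 < s.re)
    (hbeta : ∫ t in Ioi (0:ℝ), (t : ℂ) ^ ((m : ℂ)/2 - 1) * ((1 + t : ℝ) : ℂ) ^ (-s)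
      = Complex.Gamma ((m : ℂ)/2) * Complex.Gamma (s - (m : ℂ)/2) / Complex.Gamma s) :
    ∫ y in Ioi (0:ℝ), (y ^ (m - 1) : ℝ) • ((1 + y ^ 2 / 2 : ℝ) : ℂ) ^ (-s)
      = (2 : ℂ) ^ ((m : ℂ)/2 - 1) *
        (Complex.Gamma ((m : ℂ)/2) * Complex.Gamma (s - (m : ℂ)/2) / Complex.Gamma s) := by
  have himg : (fun y : ℝ => y ^ 2 / 2) '' Ioi 0 = Ioi (0:ℝ) := by
    ext t
    constructor
    · rintro ⟨y, hy, rfl⟩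
      have hy' : (0:ℝ) < y := hy
      show (0:ℝ) < y ^ 2 / 2
      positivity
    · intro ht
      have ht' : (0:ℝ) < t := ht
      refine ⟨Real.sqrt (2 * t), Real.sqrt_pos.2 (by linarith), ?_⟩
      show Real.sqrt (2 * t) ^ 2 / 2 = t
      rw [Real.sq_sqrt (by linarith)]; ring
  have hderiv : ∀ y ∈ Ioi (0:ℝ), HasDerivWithinAt (fun y : ℝ => y ^ 2 / 2) y (Ioi 0) y := by
    intro y hy
    have : HasDerivAt (fun y : ℝ => y ^ 2 / 2) (2 * y ^ 1 / 2) y := (hasDerivAt_pow 2 y).div_const 2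
    simpa using this.hasDerivWithinAt
  have hinj : InjOn (fun y : ℝ => y ^ 2 / 2) (Ioi 0) := by
    intro x hx y hy h
    simp only [div_eq_div_iff, (by norm_num : (2:ℝ) ≠ 0)] at h
    have hx' : (0:ℝ) < x := hx
    have hy' : (0:ℝ) < y := hy
    nlinarith
  have key := integral_image_eq_integral_abs_deriv_smul measurableSet_Ioi hderiv hinj
    (fun t : ℝ => (t : ℂ) ^ ((m : ℂ)/2 - 1) * ((1 + t : ℝ) : ℂ) ^ (-s))
  rw [himg, hbeta] at key
  have hptwise : ∀ y ∈ Ioi (0:ℝ),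
      |y| • (((y ^ 2 / 2 : ℝ) : ℂ) ^ ((m : ℂ)/2 - 1)
        * ((1 + y ^ 2 / 2 : ℝ) : ℂ) ^ (-s))
      = ((2:ℝ) ^ (1 - (m:ℝ)/2) : ℝ) • ((y ^ (m - 1) : ℝ) • ((1 + y ^ 2 / 2 : ℝ) : ℂ) ^ (-s)) := by
    intro y hy
    have hy' : (0:ℝ) < y := hy
    have hexp : ((m : ℂ)/2 - 1) = (((m:ℝ)/2 - 1 : ℝ) : ℂ) := by push_cast; ring
    have h1 : ((y ^ 2 / 2 : ℝ) : ℂ) ^ ((m : ℂ)/2 - 1)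
        = (((y ^ 2 / 2) ^ ((m:ℝ)/2 - 1) : ℝ) : ℂ) := by
      rw [hexp, Complex.ofReal_cpow (by positivity)]
    rw [h1, abs_of_pos hy']
    simp only [Complex.real_smul, ← mul_assoc, ← Complex.ofReal_mul]
    congr 2
    have hcast : ((m - 1 : ℕ) : ℝ) = (m:ℝ) - 1 := by
      rw [Nat.cast_sub hm]; norm_num
    rw [← Real.rpow_natCast y (m - 1), hcast, Real.div_rpow (by positivity) (by norm_num), ← Real.rpow_natCast y 2,
      ← Real.rpow_mul hy'.le, show ((2:ℕ):ℝ) * ((m:ℝ)/2 - 1) = (m:ℝ) - 2 by push_cast; ring,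
      show ((m:ℝ) - 1) = 1 + ((m:ℝ) - 2) by ring, Real.rpow_add hy', Real.rpow_one,
      show (1:ℝ) - (m:ℝ)/2 = -((m:ℝ)/2 - 1) by ring, Real.rpow_neg (by norm_num : (0:ℝ) ≤ 2)]
    have hc2 : ((2:ℝ) ^ ((m:ℝ)/2 - 1)) ≠ 0 := by positivity
    field_simp
  rw [setIntegral_congr_fun measurableSet_Ioi hptwise] at key
  rw [integral_smul] at key
  have h2 : ((2:ℝ) ^ (1 - (m:ℝ)/2) : ℝ) • (∫ y in Ioi (0:ℝ), (y ^ (m - 1) : ℝ) • ((1 + y ^ 2 / 2 : ℝ) : ℂ) ^ (-s))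
      = Complex.Gamma ((m : ℂ)/2) * Complex.Gamma (s - (m : ℂ)/2) / Complex.Gamma s := key.symm
  have h2pos : ((2:ℝ) ^ (1 - (m:ℝ)/2)) ≠ 0 := by positivity
  have hc : (2 : ℂ) ^ ((m : ℂ)/2 - 1) = (((2:ℝ) ^ ((m:ℝ)/2 - 1) : ℝ) : ℂ) := by
    rw [show ((m : ℂ)/2 - 1) = (((m:ℝ)/2 - 1 : ℝ) : ℂ) by push_cast; ring,
      Complex.ofReal_cpow (by norm_num)]
    norm_num
  rw [hc, ← h2, Complex.real_smul, ← mul_assoc, ← Complex.ofReal_mul,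
    ← Real.rpow_add (by norm_num : (0:ℝ) < 2)]
  norm_num

/-- For `m ≥ 1` and `s ∈ ℂ` with `Re(s) > m/2`,
`∫_{ℝ^m} (1 + ‖x‖²/2)^{-s} dx = (2π)^{m/2} Γ(s - m/2) / Γ(s)`. -/
theorem integral_one_add_norm_sq_div_two (m : ℕ) (hm : 1 ≤ m) (s : ℂ)
    (hs : (m : ℝ) / 2 < s.re) :
    Integrable (fun x : EuclideanSpace ℝ (Fin m) => ((1 + ‖x‖ ^ 2 / 2 : ℝ) : ℂ) ^ (-s)) ∧
    ∫ x : EuclideanSpace ℝ (Fin m), ((1 + ‖x‖ ^ 2 / 2 : ℝ) : ℂ) ^ (-s)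
      = ((2 * Real.pi : ℝ) : ℂ) ^ ((m : ℂ) / 2) * Complex.Gamma (s - (m : ℂ) / 2)
          / Complex.Gamma s := by
  have hm' : (0:ℝ) < (m:ℝ) := by exact_mod_cast hm
  have hσ : (0:ℝ) < s.re := lt_trans (by positivity) hs
  haveI : Nonempty (Fin m) := ⟨⟨0, hm⟩⟩
  -- measurability/continuity
  have hcont : Continuous (fun x : EuclideanSpace ℝ (Fin m) =>
      ((1 + ‖x‖ ^ 2 / 2 : ℝ) : ℂ) ^ (-s)) := by
    apply Continuous.cpow _ continuous_const
    · intro x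
      rw [Complex.mem_slitPlane_iff]
      left
      simp only [Complex.ofReal_re]
      positivity
    · exact Complex.continuous_ofReal.comp (by fun_prop)
  -- integrability
  have hint : Integrable (fun x : EuclideanSpace ℝ (Fin m) =>
      ((1 + ‖x‖ ^ 2 / 2 : ℝ) : ℂ) ^ (-s)) := by
    have hnr : (Module.finrank ℝ (EuclideanSpace ℝ (Fin m)) : ℝ) < 2 * s.re := by
      rw [finrank_euclideanSpace, Fintype.card_fin]; linarith
    have hbase := (integrable_rpow_neg_one_add_norm_sq (μ := volume) hnr).const_mul
      ((2:ℝ) ^ s.re)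
    refine hbase.mono' hcont.aestronglyMeasurable (Filter.Eventually.of_forall fun x => ?_)
    have hb : (0:ℝ) < 1 + ‖x‖ ^ 2 / 2 := by positivity
    rw [Complex.norm_cpow_eq_rpow_re_of_pos hb, Complex.neg_re]
    have h1 : ((1 : ℝ) + ‖x‖ ^ 2) / 2 ≤ 1 + ‖x‖ ^ 2 / 2 := by nlinarith [norm_nonneg x]
    calc (1 + ‖x‖ ^ 2 / 2) ^ (-s.re)
        ≤ (((1 : ℝ) + ‖x‖ ^ 2) / 2) ^ (-s.re) :=
          Real.rpow_le_rpow_of_nonpos (by positivity) h1 (by linarith)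
      _ = (2:ℝ) ^ s.re * ((1 : ℝ) + ‖x‖ ^ 2) ^ (-(2 * s.re) / 2) := by
          rw [Real.div_rpow (by positivity) (by norm_num : (0:ℝ) ≤ 2),
            show -(2*s.re)/2 = -s.re by ring,
            Real.rpow_neg (by norm_num : (0:ℝ) ≤ 2) s.re, div_inv_eq_mul, mul_comm]
  refine ⟨hint, ?_⟩
  have hare : ((m:ℂ)/2).re = (m:ℝ)/2 := by
    rw [show (m:ℂ)/2 = (((m:ℝ)/2 : ℝ):ℂ) by push_cast; ring, Complex.ofReal_re]
  have hbeta : ∫ t in Ioi (0:ℝ), (t : ℂ) ^ ((m : ℂ)/2 - 1) * ((1 + t : ℝ) : ℂ) ^ (-s)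
      = Complex.Gamma ((m : ℂ)/2) * Complex.Gamma (s - (m : ℂ)/2) / Complex.Gamma s := by
    have h := betaIoi ((m:ℂ)/2) (s - (m:ℂ)/2) (by rw [hare]; positivity)
      (by rw [Complex.sub_re, hare]; linarith)
    rw [show (m:ℂ)/2 + (s - (m:ℂ)/2) = s by ring] at h
    exact h
  have hrad := radialIoi m hm s hs hbeta
  have hpolar := MeasureTheory.integral_fun_norm_addHaar (volume : Measure (EuclideanSpace ℝ (Fin m)))
    (fun y : ℝ => ((1 + y ^ 2 / 2 : ℝ) : ℂ) ^ (-s))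
  rw [finrank_euclideanSpace, Fintype.card_fin] at hpolar
  rw [hpolar, hrad]
  have hvol : (volume (Metric.ball (0 : EuclideanSpace ℝ (Fin m)) 1)).toReal
      = Real.sqrt π ^ m / Real.Gamma ((m:ℝ)/2 + 1) := by
    rw [EuclideanSpace.volume_ball, Fintype.card_fin]
    simp only [ENNReal.ofReal_one, one_pow, one_mul]
    rw [ENNReal.toReal_ofReal (by positivity)]
  rw [measureReal_def, hvol]
  have hGpos : 0 < Real.Gamma ((m:ℝ)/2) := Real.Gamma_pos_of_pos (by positivity)
  have hkey : ((m:ℝ) * (Real.sqrt π ^ m / Real.Gamma ((m:ℝ)/2 + 1)) * (2:ℝ) ^ ((m:ℝ)/2 - 1)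
      * Real.Gamma ((m:ℝ)/2) : ℝ) = (2 * π) ^ ((m:ℝ)/2) := by
    have hG : Real.Gamma ((m:ℝ)/2 + 1) = ((m:ℝ)/2) * Real.Gamma ((m:ℝ)/2) :=
      Real.Gamma_add_one (by positivity)
    have hππ : Real.sqrt π ^ m = π ^ ((m:ℝ)/2) := by
      rw [Real.sqrt_eq_rpow, ← Real.rpow_natCast (π ^ ((1:ℝ)/2)) m, ← Real.rpow_mul pi_pos.le]
      ring_nf
    have h2 : (2:ℝ) ^ ((m:ℝ)/2) = 2 ^ ((m:ℝ)/2 - 1) * 2 := by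
      rw [← Real.rpow_add_one (by norm_num : (2:ℝ) ≠ 0)]
      norm_num
    rw [Real.mul_rpow (by norm_num) pi_pos.le, hG, hππ, h2]
    field_simp
  have hc2 : (2 : ℂ) ^ ((m : ℂ)/2 - 1) = (((2:ℝ) ^ ((m:ℝ)/2 - 1) : ℝ) : ℂ) := by
    rw [show ((m : ℂ)/2 - 1) = (((m:ℝ)/2 - 1 : ℝ) : ℂ) by push_cast; ring,
      Complex.ofReal_cpow (by norm_num)]
    norm_num
  have hc2pi : ((2 * π : ℝ) : ℂ) ^ ((m : ℂ)/2) = (((2 * π) ^ ((m:ℝ)/2) : ℝ) : ℂ) := by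
    rw [show ((m : ℂ)/2) = (((m:ℝ)/2 : ℝ) : ℂ) by push_cast; ring,
      Complex.ofReal_cpow (by positivity)]
  have hcG : Complex.Gamma ((m : ℂ)/2) = ((Real.Gamma ((m:ℝ)/2) : ℝ) : ℂ) := by
    rw [show ((m : ℂ)/2) = (((m:ℝ)/2 : ℝ) : ℂ) by push_cast; ring, Complex.Gamma_ofReal]
  rw [hc2, hc2pi, hcG, ← hkey, nsmul_eq_mul, Complex.real_smul]
  push_cast
  ring
end

section
/- For every real v and y > 0, K_v(y) satisfies the modified Bessel differential equation in the form (y d/dy)² K_v(y) = (v² + y²) K_v(y). -/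
open MeasureTheory Real Set Filter Topology

/-- The modified Bessel function of the second kind,
`K_v(y) = (1/2) ∫_0^∞ e^{-y(t+1/t)/2} t^v dt/t`. -/
noncomputable def besselK (v y : ℝ) : ℝ :=
  (1 / 2) * ∫ t in Set.Ioi (0 : ℝ), Real.exp (-(y * (t + t⁻¹) / 2)) * t ^ (v - 1)

namespace BesselODEAux

/-- The basic integrand family. -/
noncomputable def f (y c t : ℝ) : ℝ := Real.exp (-(y * (t + t⁻¹) / 2)) * t ^ c

lemma f_nonneg (y c : ℝ) {t : ℝ} (ht : 0 < t) : 0 ≤ f y c t :=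
  mul_nonneg (exp_pos _).le (rpow_nonneg ht.le _)

lemma continuousOn_f (y c : ℝ) : ContinuousOn (f y c) (Ioi 0) := by
  apply ContinuousOn.mul
  · apply Real.continuous_exp.comp_continuousOn
    apply ContinuousOn.neg
    apply ContinuousOn.div_const
    apply ContinuousOn.mul continuousOn_const
    exact continuousOn_id.add (continuousOn_inv₀.mono (fun t ht => ne_of_gt ht))
  · exact fun t ht => (Real.continuousAt_rpow_const t c (Or.inl (ne_of_gt ht))).continuousWithinAt

lemma tendsto_f_atTop {y : ℝ} (hy : 0 < y) (c : ℝ) : Tendsto (f y c) atTop (𝓝 0) := by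
  apply squeeze_zero' (g := fun t => t ^ c * Real.exp (-(y/2) * t))
  · filter_upwards [eventually_gt_atTop (0:ℝ)] with t ht using f_nonneg y c ht
  · filter_upwards [eventually_gt_atTop (0:ℝ)] with t ht
    rw [f, mul_comm]
    have h : -(y * (t + t⁻¹) / 2) ≤ -(y/2) * t := by nlinarith [inv_pos.2 ht]
    exact mul_le_mul_of_nonneg_left (Real.exp_le_exp.2 h) (rpow_nonneg ht.le c)
  · exact tendsto_rpow_mul_exp_neg_mul_atTop_nhds_zero c (y/2) (half_pos hy)

lemma tendsto_f_zero {y : ℝ} (hy : 0 < y) (c : ℝ) : Tendsto (f y c) (𝓝[>] 0) (𝓝 0) := by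
  apply squeeze_zero' (g := (fun s => s ^ (-c) * Real.exp (-(y/2) * s)) ∘ (fun t : ℝ => t⁻¹))
  · filter_upwards [self_mem_nhdsWithin] with t ht using f_nonneg y c ht
  · filter_upwards [self_mem_nhdsWithin] with t (ht : (0:ℝ) < t)
    have h1 : (t⁻¹) ^ (-c) = t ^ c := by
      rw [Real.inv_rpow ht.le, Real.rpow_neg ht.le, inv_inv]
    simp only [Function.comp, h1, f]
    have h : -(y * (t + t⁻¹) / 2) ≤ -(y/2) * t⁻¹ := by nlinarith [inv_pos.2 ht]
    calc Real.exp (-(y * (t + t⁻¹) / 2)) * t ^ c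
        ≤ Real.exp (-(y/2) * t⁻¹) * t ^ c :=
          mul_le_mul_of_nonneg_right (Real.exp_le_exp.2 h) (rpow_nonneg ht.le c)
      _ = t ^ c * Real.exp (-(y/2) * t⁻¹) := by rw [mul_comm]
  · exact (tendsto_rpow_mul_exp_neg_mul_atTop_nhds_zero (-c) (y/2)
      (half_pos hy)).comp tendsto_inv_nhdsGT_zero

lemma exists_bound {y : ℝ} (hy : 0 < y) (c : ℝ) :
    ∃ C : ℝ, 0 ≤ C ∧ ∀ t ∈ Ioi (0:ℝ), f y c t ≤ C := by
  obtain ⟨δ, hδ, hδ'⟩ := Metric.mem_nhdsWithin_iff.1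
    ((tendsto_f_zero hy c).eventually_lt_const one_pos)
  obtain ⟨T, hT⟩ := eventually_atTop.1 ((tendsto_f_atTop hy c).eventually_lt_const one_pos)
  have hsub : Icc δ (max T δ) ⊆ Ioi (0:ℝ) := fun x hx => lt_of_lt_of_le hδ hx.1
  obtain ⟨M, hM⟩ := isCompact_Icc.exists_bound_of_continuousOn ((continuousOn_f y c).mono hsub)
  refine ⟨max 1 M, le_trans zero_le_one (le_max_left _ _), fun t ht => ?_⟩
  rcases lt_or_ge t δ with h | h
  · have : t ∈ Metric.ball (0:ℝ) δ ∩ Ioi 0 := by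
      constructor
      · simpa [Real.dist_eq, abs_of_pos (mem_Ioi.1 ht)] using h
      · exact ht
    exact le_trans (hδ' this).le (le_max_left _ _)
  rcases le_or_gt T t with h2 | h2
  · exact le_trans (hT t h2).le (le_max_left _ _)
  · have : t ∈ Icc δ (max T δ) := ⟨h, le_trans h2.le (le_max_left _ _)⟩
    exact le_trans (le_trans (le_abs_self _) (hM t this)) (le_max_right _ _)

lemma aesm_f (y c : ℝ) : AEStronglyMeasurable (f y c) (volume.restrict (Ioi 0)) :=
  (continuousOn_f y c).aestronglyMeasurable measurableSet_Ioi

lemma integrableOn_f {y : ℝ} (hy : 0 < y) (c : ℝ) : IntegrableOn (f y c) (Ioi 0) := by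
  obtain ⟨C, hC0, hC⟩ := exists_bound (half_pos hy) c
  have hint : Integrable (fun t => C * Real.exp (-(y/4) * t)) (volume.restrict (Ioi 0)) :=
    (exp_neg_integrableOn_Ioi 0 (by positivity)).const_mul C
  apply Integrable.mono' hint (aesm_f y c)
  rw [ae_restrict_iff' measurableSet_Ioi]
  filter_upwards with t ht
  have ht' : 0 < t := ht
  have key : f y c t = Real.exp (-(y/2 * (t + t⁻¹) / 2)) * f (y/2) c t := by
    rw [f, f, ← mul_assoc, ← Real.exp_add]
    ring_nf
  rw [Real.norm_of_nonneg (f_nonneg y c ht'), key]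
  have h1 : Real.exp (-(y/2 * (t + t⁻¹) / 2)) ≤ Real.exp (-(y/4) * t) := by
    rw [Real.exp_le_exp]
    nlinarith [inv_pos.2 ht']
  calc Real.exp (-(y/2 * (t + t⁻¹) / 2)) * f (y/2) c t
      ≤ Real.exp (-(y/4) * t) * C :=
        mul_le_mul h1 (hC t ht) (f_nonneg _ c ht') (Real.exp_pos _).le
    _ = C * Real.exp (-(y/4) * t) := mul_comm _ _

/-- The family of integrals. -/
noncomputable def I (c y : ℝ) : ℝ :=
  ∫ t in Set.Ioi (0 : ℝ), Real.exp (-(y * (t + t⁻¹) / 2)) * t ^ c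

lemma I_eq_integral_f (c y : ℝ) : I c y = ∫ t in Set.Ioi (0:ℝ), f y c t := rfl

lemma hasDerivAt_I (c : ℝ) {y : ℝ} (hy : 0 < y) :
    HasDerivAt (fun z => I c z) (-(1/2) * (I (c+1) y + I (c-1) y)) y := by
  have key := hasDerivAt_integral_of_dominated_loc_of_deriv_le
    (μ := volume.restrict (Ioi 0)) (x₀ := y) (s := Metric.ball y (y/2))
    (F := fun x t => Real.exp (-(x * (t + t⁻¹) / 2)) * t ^ c)
    (F' := fun x t => -(1/2) * (f x (c+1) t + f x (c-1) t))
    (bound := fun t => (1/2) * (f (y/2) (c+1) t + f (y/2) (c-1) t))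
    (Metric.ball_mem_nhds y (half_pos hy))
    (Eventually.of_forall fun x => aesm_f x c)
    (integrableOn_f hy c)
    (((aesm_f y (c+1)).add (aesm_f y (c-1))).const_mul _)
    ?_
    (((integrableOn_f (half_pos hy) (c+1)).add (integrableOn_f (half_pos hy) (c-1))).const_mul _)
    ?_
  · have h2 : (∫ t in Set.Ioi (0:ℝ), -(1/2) * (f y (c+1) t + f y (c-1) t))
        = -(1/2) * (I (c+1) y + I (c-1) y) := by
      rw [integral_const_mul, integral_add (integrableOn_f hy (c+1)) (integrableOn_f hy (c-1))]
      rfl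
    rw [← h2]
    exact key.2
  · -- bound
    rw [ae_restrict_iff' measurableSet_Ioi]
    filter_upwards with t ht
    intro x hx
    have ht' : (0:ℝ) < t := ht
    have hx2 : y/2 ≤ x := by
      have := abs_lt.1 (mem_ball_iff_norm.1 hx)
      linarith [this.1]
    have hfle : ∀ c' : ℝ, f x c' t ≤ f (y/2) c' t := by
      intro c'
      apply mul_le_mul_of_nonneg_right _ (rpow_nonneg ht'.le c')
      rw [Real.exp_le_exp]
      have hs : 0 < t + t⁻¹ := by positivity
      nlinarith
    rw [Real.norm_eq_abs, abs_mul, abs_of_nonneg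
      (add_nonneg (f_nonneg x (c+1) ht') (f_nonneg x (c-1) ht'))]
    have : |(-(1/2) : ℝ)| = 1/2 := by norm_num
    rw [this]
    have := add_le_add (hfle (c+1)) (hfle (c-1))
    linarith
  · -- differentiability
    rw [ae_restrict_iff' measurableSet_Ioi]
    filter_upwards with t ht
    intro x hx
    have ht' : (0:ℝ) < t := ht
    have h1 : HasDerivAt (fun x : ℝ => -(x * (t + t⁻¹) / 2)) (-((t + t⁻¹) / 2)) x := by
      exact (((hasDerivAt_id x).mul_const (t+t⁻¹)).div_const 2).neg.congr_deriv (by ring)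
    have h2 := (h1.exp.mul_const (t ^ c))
    refine h2.congr_deriv (Eq.symm ?_)
    have e1 : t ^ (c+1) = t ^ c * t := Real.rpow_add_one ht'.ne' c
    have e2 : t ^ (c-1) = t ^ c / t := Real.rpow_sub_one ht'.ne' c
    simp only [f, e1, e2]
    field_simp

/-- Boundary function for integration by parts. -/
noncomputable def H (v y t : ℝ) : ℝ :=
  if t ≤ 0 then 0
  else (-(y/2) * (t^(v+1) - t^(v-1)) - v * t^v) * Real.exp (-(y*(t+t⁻¹)/2))

/-- Derivative of `H` on `(0, ∞)`. -/
noncomputable def Hd (v y t : ℝ) : ℝ :=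
  (y^2/4 * (t^(v+1) - 2*t^(v-1) + t^(v-3)) - y/2*(t^v + t^(v-2)) - v^2 * t^(v-1)) *
    Real.exp (-(y*(t+t⁻¹)/2))

lemma H_comb (v y : ℝ) {t : ℝ} (ht : 0 < t) :
    H v y t = -(y/2) * f y (v+1) t + ((y/2) * f y (v-1) t + (-v) * f y v t) := by
  rw [H, if_neg (not_le.2 ht)]
  simp only [f]
  ring

lemma Hd_comb (v y : ℝ) : Hd v y = fun t => y^2/4 * f y (v+1) t +
    ((-(y^2/2) - v^2) * f y (v-1) t + (y^2/4 * f y (v-3) t +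
    ((-(y/2)) * f y v t + (-(y/2)) * f y (v-2) t))) := by
  funext t
  simp only [Hd, f]
  ring

lemma H_tendsto_zero (v : ℝ) {y : ℝ} (hy : 0 < y) :
    Tendsto (H v y) (𝓝[>] 0) (𝓝 0) := by
  have h := ((tendsto_f_zero hy (v+1)).const_mul (-(y/2))).add
    (((tendsto_f_zero hy (v-1)).const_mul (y/2)).add ((tendsto_f_zero hy v).const_mul (-v)))
  simp only [mul_zero, add_zero] at h
  apply h.congr'
  filter_upwards [self_mem_nhdsWithin] with t (ht : (0:ℝ) < t)
  exact (H_comb v y ht).symm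

lemma H_tendsto_atTop (v : ℝ) {y : ℝ} (hy : 0 < y) :
    Tendsto (H v y) atTop (𝓝 0) := by
  have h := ((tendsto_f_atTop hy (v+1)).const_mul (-(y/2))).add
    (((tendsto_f_atTop hy (v-1)).const_mul (y/2)).add ((tendsto_f_atTop hy v).const_mul (-v)))
  simp only [mul_zero, add_zero] at h
  apply h.congr'
  filter_upwards [eventually_gt_atTop (0:ℝ)] with t ht
  exact (H_comb v y ht).symm

lemma H_contWithin (v : ℝ) {y : ℝ} (hy : 0 < y) :
    ContinuousWithinAt (H v y) (Ici 0) 0 := by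
  have h0 : H v y 0 = 0 := if_pos le_rfl
  unfold ContinuousWithinAt
  rw [h0, show Ici (0:ℝ) = Ioi 0 ∪ {0} from (Set.Ioi_union_left).symm, nhdsWithin_union]
  rw [tendsto_sup]
  refine ⟨H_tendsto_zero v hy, ?_⟩
  rw [nhdsWithin_singleton]
  have := tendsto_pure_nhds (H v y) 0
  rwa [h0] at this

lemma integrableOn_Hd (v : ℝ) {y : ℝ} (hy : 0 < y) : IntegrableOn (Hd v y) (Ioi 0) := by
  rw [Hd_comb]
  exact ((integrableOn_f hy (v+1)).const_mul _).add
    (((integrableOn_f hy (v-1)).const_mul _).add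
      (((integrableOn_f hy (v-3)).const_mul _).add
        (((integrableOn_f hy v).const_mul _).add ((integrableOn_f hy (v-2)).const_mul _))))

lemma hasDerivAt_H (v y : ℝ) {t : ℝ} (ht : 0 < t) :
    HasDerivAt (H v y) (Hd v y t) t := by
  have hne := ht.ne'
  have hEq : H v y =ᶠ[𝓝 t]
      fun s => (-(y/2) * (s^(v+1) - s^(v-1)) - v * s^v) * Real.exp (-(y*(s+s⁻¹)/2)) := by
    filter_upwards [Ioi_mem_nhds ht] with s hs
    rw [H, if_neg (not_le.2 (mem_Ioi.1 hs))]
  have hp1 : HasDerivAt (fun s : ℝ => s ^ (v+1)) ((v+1) * t^(v+1-1)) t :=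
    Real.hasDerivAt_rpow_const (Or.inl hne)
  have hp2 : HasDerivAt (fun s : ℝ => s ^ (v-1)) ((v-1) * t^(v-1-1)) t :=
    Real.hasDerivAt_rpow_const (Or.inl hne)
  have hp3 : HasDerivAt (fun s : ℝ => s ^ v) (v * t^(v-1)) t :=
    Real.hasDerivAt_rpow_const (Or.inl hne)
  have hP : HasDerivAt (fun s : ℝ => -(y/2) * (s^(v+1) - s^(v-1)) - v * s^v)
      (-(y/2) * ((v+1) * t^(v+1-1) - (v-1) * t^(v-1-1)) - v * (v * t^(v-1))) t :=
    ((hp1.sub hp2).const_mul _).sub (hp3.const_mul v)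
  have hin : HasDerivAt (fun s : ℝ => -(y*(s+s⁻¹)/2)) (-(y*(1 + -(t^2)⁻¹)/2)) t :=
    ((((hasDerivAt_id t).add (hasDerivAt_inv hne)).const_mul y).div_const 2).neg
  have hG := hP.mul hin.exp
  apply HasDerivAt.congr_of_eventuallyEq _ hEq
  refine hG.congr_deriv (Eq.symm ?_)
  have hw : ∀ (k : ℕ) (E : ℝ), E = (v-3) + k → t ^ E = t^(v-3) * t^(k:ℕ) := by
    intro k E hE
    rw [hE, Real.rpow_add ht, Real.rpow_natCast]
  rw [Hd.eq_def, hw 4 (v+1) (by push_cast; ring), hw 3 v (by push_cast; ring),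
      hw 2 (v-1) (by push_cast; ring), hw 1 (v-2) (by push_cast; ring),
      hw 3 (v+1-1) (by push_cast; ring), hw 1 (v-1-1) (by push_cast; ring)]
  field_simp
  ring

lemma integral_Hd (v : ℝ) {y : ℝ} (hy : 0 < y) : ∫ t in Set.Ioi (0:ℝ), Hd v y t = 0 := by
  have h := integral_Ioi_of_hasDerivAt_of_tendsto (H_contWithin v hy)
    (fun x hx => hasDerivAt_H v y (mem_Ioi.1 hx)) (integrableOn_Hd v hy)
    (H_tendsto_atTop v hy)
  rw [h, show H v y 0 = 0 from if_pos le_rfl, sub_zero]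

lemma core (v : ℝ) {y : ℝ} (hy : 0 < y) :
    y^2/4 * I (v+1) y + ((-(y^2/2) - v^2) * I (v-1) y + (y^2/4 * I (v-3) y +
      ((-(y/2)) * I v y + (-(y/2)) * I (v-2) y))) = 0 := by
  have h1 := integrableOn_f hy (v+1)
  have h2 := integrableOn_f hy (v-1)
  have h3 := integrableOn_f hy (v-3)
  have h4 := integrableOn_f hy v
  have h5 := integrableOn_f hy (v-2)
  have key := integral_Hd v hy
  simp only [Hd_comb] at key
  rw [integral_add, integral_add, integral_add, integral_add,
    integral_const_mul, integral_const_mul, integral_const_mul, integral_const_mul,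
    integral_const_mul] at key
  · simpa only [← I_eq_integral_f] using key
  · exact h4.const_mul _
  · exact h5.const_mul _
  · exact h3.const_mul _
  · exact (h4.const_mul _).add (h5.const_mul _)
  · exact h2.const_mul _
  · exact (h3.const_mul _).add ((h4.const_mul _).add (h5.const_mul _))
  · exact h1.const_mul _
  · exact (h2.const_mul _).add ((h3.const_mul _).add ((h4.const_mul _).add (h5.const_mul _)))

end BesselODEAux

open BesselODEAux in
/-- The modified Bessel differential equation in the form
`(y d/dy)² K_v(y) = (v² + y²) K_v(y)` for `y > 0`. -/
theorem besselK_ode (v y : ℝ) (hy : 0 < y) :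
    y * deriv (fun z : ℝ => z * deriv (besselK v) z) y = (v ^ 2 + y ^ 2) * besselK v y := by
  have hbk : besselK v = fun z => 1/2 * I (v-1) z := rfl
  have hK : ∀ z : ℝ, 0 < z → HasDerivAt (besselK v) (-(1/4) * (I v z + I (v-2) z)) z := by
    intro z hz
    have h := (hasDerivAt_I (v-1) hz).const_mul (1/2 : ℝ)
    rw [show v-1+1 = v by ring, show v-1-1 = v-2 by ring] at h
    rw [hbk]
    refine h.congr_deriv ?_
    ring
  have hKd : ∀ z : ℝ, 0 < z → deriv (besselK v) z = -(1/4) * (I v z + I (v-2) z) :=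
    fun z hz => (hK z hz).deriv
  have hEq : (fun z : ℝ => z * deriv (besselK v) z)
      =ᶠ[𝓝 y] fun z => z * (-(1/4) * (I v z + I (v-2) z)) := by
    filter_upwards [Ioi_mem_nhds hy] with z hz
    rw [hKd z (Set.mem_Ioi.1 hz)]
  have hG : HasDerivAt (fun z => z * (-(1/4) * (I v z + I (v-2) z)))
      (1 * (-(1/4) * (I v y + I (v-2) y)) +
        y * (-(1/4) * ((-(1/2) * (I (v+1) y + I (v-1) y)) +
          (-(1/2) * (I (v-2+1) y + I (v-2-1) y))))) y :=
    (hasDerivAt_id y).mul (((hasDerivAt_I v hy).add (hasDerivAt_I (v-2) hy)).const_mul _)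
  rw [hEq.deriv_eq, hG.deriv]
  have hc := core v hy
  rw [show v-2+1 = v-1 by ring, show v-2-1 = v-3 by ring]
  rw [hbk]
  linear_combination (1/2) * hc
end
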